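/- Let V be a real vector space and S ⊆ V a convex set that is a base of the proper generating cone K = ⋃_{λ≥0} λS (each nonzero element of K has a unique representation λα, λ>0, α∈S). Then the Minkowski functional p_S of conv(S ∪ −S), p_S(v) = inf{λ>0 | v ∈ λ·conv(S ∪ −S)}, satisfies p_S(v) = inf{e(α)+e(β) | α,β ∈ K, v = α − β}, where e is the strictly positive linear functional with e = 1 on S; in particular p_S(α) = e(α) for all α ∈ K. -/

import Mathlib

open Pointwise

/-- Let `S` be a convex base of the proper generating cone
`K = ⋃_{λ ≥ 0} λ S` of a real vector space `V`, and `e` the strictly positive linear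
functional with `e = 1` on `S`. Then the Minkowski functional `p_S` of
`conv(S ∪ -S)` satisfies `p_S(v) = inf {e(a) + e(b) | a, b ∈ K, v = a - b}`; in
particular `p_S(a) = e(a)` for all `a ∈ K`. -/
theorem stmt_19 (V : Type*) [AddCommGroup V] [Module ℝ V]
    (S : Set V) (hS : Convex ℝ S)
    (K : Set V) (hK : K = {v | ∃ lam : ℝ, 0 ≤ lam ∧ ∃ a ∈ S, v = lam • a})
    (hproper : ∀ v : V, v ∈ K → -v ∈ K → v = 0)
    (hgen : ∀ v : V, ∃ a ∈ K, ∃ b ∈ K, v = a - b)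
    (huniq : ∀ v ∈ K, v ≠ 0 → ∃! p : ℝ × V, 0 < p.1 ∧ p.2 ∈ S ∧ v = p.1 • p.2)
    (e : V →ₗ[ℝ] ℝ)
    (he1 : ∀ a ∈ S, e a = 1)
    (hepos : ∀ v ∈ K, v ≠ 0 → 0 < e v) :
    (∀ v : V, sInf {lam : ℝ | 0 < lam ∧ v ∈ lam • (convexHull ℝ (S ∪ -S))}
        = sInf {r : ℝ | ∃ a ∈ K, ∃ b ∈ K, v = a - b ∧ r = e a + e b}) ∧
    ∀ a ∈ K, sInf {lam : ℝ | 0 < lam ∧ a ∈ lam • (convexHull ℝ (S ∪ -S))} = e a := by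
  obtain ⟨a₀, ha₀K, -⟩ := hgen 0
  have h0K : (0 : V) ∈ K := by
    rw [hK] at ha₀K ⊢
    obtain ⟨lam, _, α, hα, _⟩ := ha₀K
    exact ⟨0, le_refl 0, α, hα, (zero_smul ℝ α).symm⟩
  have hSne : S.Nonempty := by
    rw [hK] at ha₀K
    obtain ⟨lam, _, α, hα, _⟩ := ha₀K
    exact ⟨α, hα⟩
  obtain ⟨α₀, hα₀⟩ := hSne
  set C := convexHull ℝ (S ∪ -S) with hC
  have hCeq : C = convexJoin ℝ S (-S) := by
    rw [hC, convexHull_union ⟨α₀, hα₀⟩ ⟨-α₀, by simpa using hα₀⟩,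
      hS.convexHull_eq, hS.neg.convexHull_eq]
  have heK : ∀ a ∈ K, 0 ≤ e a ∧ ∃ α ∈ S, a = (e a) • α := by
    intro a ha
    rw [hK] at ha
    obtain ⟨lam, hlam, α, hα, rfl⟩ := ha
    have hea : e (lam • α) = lam := by
      rw [map_smul, he1 α hα, smul_eq_mul, mul_one]
    exact ⟨by rw [hea]; exact hlam, α, hα, by rw [hea]⟩
  have hKmem : ∀ (l : ℝ), 0 ≤ l → ∀ α ∈ S, l • α ∈ K := by
    intro l hl α hα
    rw [hK]
    exact ⟨l, hl, α, hα, rfl⟩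
  have h0C : (0 : V) ∈ C := by
    rw [hCeq, mem_convexJoin]
    refine ⟨α₀, hα₀, -α₀, by simpa using hα₀, (1:ℝ)/2, (1:ℝ)/2, by norm_num, by norm_num,
      by norm_num, by module⟩
  -- A ⊆ B
  have hAB : ∀ v : V, ∀ lam : ℝ, 0 < lam → v ∈ lam • C →
      ∃ a ∈ K, ∃ b ∈ K, v = a - b ∧ lam = e a + e b := by
    intro v lam hlam hv
    obtain ⟨c, hc, rfl⟩ := hv
    rw [hCeq, mem_convexJoin] at hc
    obtain ⟨α, hα, nβ, hnβ, p, q, hp, hq, hpq, rfl⟩ := hc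
    rw [Set.mem_neg] at hnβ
    refine ⟨(lam * p) • α, hKmem _ (by positivity) α hα,
      (lam * q) • (-nβ), hKmem _ (by positivity) _ hnβ, by module, ?_⟩
    rw [map_smul, map_smul, he1 α hα, he1 (-nβ) hnβ]
    simp only [smul_eq_mul, mul_one]
    rw [← mul_add, hpq, mul_one]
  -- B ∩ (0,∞) ⊆ A
  have hBA : ∀ v : V, ∀ r : ℝ, 0 < r →
      (∃ a ∈ K, ∃ b ∈ K, v = a - b ∧ r = e a + e b) → v ∈ r • C := by
    intro v r hr ⟨a, ha, b, hb, hvab, hre⟩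
    obtain ⟨hea, α, hα, haα⟩ := heK a ha
    obtain ⟨heb, β, hβ, hbβ⟩ := heK b hb
    refine ⟨r⁻¹ • v, ?_, smul_inv_smul₀ (ne_of_gt hr) v⟩
    rw [hCeq, mem_convexJoin]
    refine ⟨α, hα, -β, by simpa using hβ, e a / r, e b / r, by positivity, by positivity,
      ?_, ?_⟩
    · rw [← add_div, ← hre, div_self (ne_of_gt hr)]
    · have hv' : v = (e a) • α - (e b) • β := by rw [hvab, ← haα, ← hbβ]
      rw [hv', div_eq_mul_inv, div_eq_mul_inv]
      module
  have key : ∀ v : V, sInf {lam : ℝ | 0 < lam ∧ v ∈ lam • C}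
      = sInf {r : ℝ | ∃ a ∈ K, ∃ b ∈ K, v = a - b ∧ r = e a + e b} := by
    intro v
    by_cases hv0 : v = 0
    · subst hv0
      have hA : {lam : ℝ | 0 < lam ∧ (0:V) ∈ lam • C} = Set.Ioi 0 := by
        ext lam
        simp only [Set.mem_setOf_eq, Set.mem_Ioi]
        exact ⟨fun h => h.1, fun h => ⟨h, ⟨0, h0C, smul_zero lam⟩⟩⟩
      rw [hA, csInf_Ioi]
      symm
      apply IsLeast.csInf_eq
      constructor
      · exact ⟨0, h0K, 0, h0K, by simp, by simp⟩
      · rintro r ⟨a, ha, b, hb, -, rfl⟩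
        have := (heK a ha).1
        have := (heK b hb).1
        linarith
    · have hsets : {lam : ℝ | 0 < lam ∧ v ∈ lam • C}
          = {r : ℝ | ∃ a ∈ K, ∃ b ∈ K, v = a - b ∧ r = e a + e b} := by
        ext r
        constructor
        · rintro ⟨hr, hv⟩
          exact hAB v r hr hv
        · rintro ⟨a, ha, b, hb, hvab, hre⟩
          have hea := heK a ha
          have heb := heK b hb
          have hrpos : 0 < r := by
            rcases lt_or_eq_of_le (by linarith [hea.1, heb.1] : (0:ℝ) ≤ r) with h | h
            · exact h
            · exfalso
              have hea0 : e a = 0 := by linarith [hea.1, heb.1]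
              have heb0 : e b = 0 := by linarith [hea.1, heb.1]
              obtain ⟨-, α, -, haα⟩ := hea
              obtain ⟨-, β, -, hbβ⟩ := heb
              apply hv0
              rw [hvab, haα, hbβ, hea0, heb0]
              simp
          exact ⟨hrpos, hBA v r hrpos ⟨a, ha, b, hb, hvab, hre⟩⟩
      rw [hsets]
  refine ⟨key, fun a ha => ?_⟩
  rw [key a]
  apply IsLeast.csInf_eq
  constructor
  · exact ⟨a, ha, 0, h0K, by simp, by simp⟩
  · rintro r ⟨x, hx, y, hy, hvxy, rfl⟩
    have hxy : e a = e x - e y := by rw [hvxy, map_sub]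
    have := (heK y hy).1
    linarith
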